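/- If j = 2^{k+1}s + (1 − (−2)^k)/3 > 0 for some integer s and nonnegative integer k, then k ≤ ⌈log₂ j⌉ + 1, with equality if and only if s = 0. -/

import Mathlib

theorem k_le_ceil_log (j s t : ℤ) (k : ℕ) (hj : 0 < j)
    (ht : 3 * t = 1 - (-2 : ℤ) ^ k) (hjform : j = 2 ^ (k + 1) * s + t) :
    (k : ℤ) ≤ ⌈Real.logb 2 (j : ℝ)⌉ + 1 ∧
    ((k : ℤ) = ⌈Real.logb 2 (j : ℝ)⌉ + 1 ↔ s = 0) := by
  have hceil : ⌈Real.logb 2 (j : ℝ)⌉ = Nat.clog 2 j.toNat := by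
    have hn : ((j.toNat : ℤ) : ℝ) = (j : ℝ) := by rw [Int.toNat_of_nonneg hj.le]
    rw [← hn]
    push_cast
    rw [show ((2:ℝ)) = ((2:ℕ):ℝ) by norm_num, Real.ceil_logb_natCast (by positivity),
      Int.clog_natCast]
  rw [hceil]
  set n := j.toNat with hn'
  have hnj : (n : ℤ) = j := Int.toNat_of_nonneg hj.le
  -- basic bounds on t
  have hsign : ((-2:ℤ))^k = 2^k ∨ ((-2:ℤ))^k = -(2^k) := by
    rcases Nat.even_or_odd k with h | h
    · left; exact h.neg_pow 2
    · right; exact h.neg_pow 2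
  rcases Nat.eq_zero_or_pos k with hk0 | hkpos
  · -- k = 0
    subst hk0
    have ht0 : t = 0 := by simpa using ht
    have hs : 1 ≤ s := by
      have h2 : j = 2 * s := by rw [hjform, ht0]; ring
      omega
    refine ⟨by positivity, ?_, ?_⟩
    · intro h
      exfalso
      have : (0:ℤ) ≤ (Nat.clog 2 n : ℤ) := by positivity
      omega
    · intro h; omega
  · obtain ⟨m, rfl⟩ : ∃ m, k = m + 1 := ⟨k - 1, by omega⟩
    have hP : (1:ℤ) ≤ 2 ^ m := one_le_pow₀ (by norm_num)
    by_cases hs0 : s = 0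
    · subst hs0
      simp only [mul_zero, zero_add] at hjform
      subst hjform
      -- j = t > 0 forces the minus sign
      have hneg : ((-2:ℤ))^(m+1) = -(2^(m+1)) := by
        rcases hsign with h | h
        · exfalso
          rw [h] at ht
          have : (2:ℤ) ≤ 2 ^ (m+1) := by
            calc (2:ℤ) = 2^1 := by ring
            _ ≤ 2^(m+1) := pow_le_pow_right₀ (by norm_num) (by omega)
          omega
        · exact h
      rw [hneg] at ht
      -- 3 * j = 2^(m+1) + 1, so 3 * n = 2^(m+1) + 1 in ℕ
      have h3n : 3 * n = 2^(m+1) + 1 := by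
        have : (3 * n : ℤ) = 2^(m+1) + 1 := by rw [hnj]; omega
        exact_mod_cast this
      have hle : Nat.clog 2 n ≤ m := by
        rw [Nat.clog_le_iff_le_pow one_lt_two]
        have h1 : (1:ℕ) ≤ 2^m := Nat.one_le_two_pow
        have : 2^(m+1) = 2 * 2^m := by ring
        omega
      have hge : m ≤ Nat.clog 2 n := by
        rcases Nat.eq_zero_or_pos m with h | h
        · omega
        · obtain ⟨p, rfl⟩ : ∃ p, m = p + 1 := ⟨m - 1, by omega⟩
          have : 2^p < n := by
            have : 2^(p+1+1) = 4 * 2^p := by ring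
            omega
          have := (Nat.lt_clog_iff_pow_lt one_lt_two).mpr this
          omega
      have hcl : Nat.clog 2 n = m := le_antisymm hle hge
      rw [hcl]
      refine ⟨by push_cast; omega, ?_, fun _ => rfl⟩
      intro _; rfl
    · -- s ≠ 0: show s ≥ 1 and k ≤ clog
      have htub : 3 * t ≤ 2^(m+1) + 1 := by
        rcases hsign with h | h <;> rw [h] at ht <;> omega
      have htlb : 1 - 2^(m+1) ≤ 3 * t := by
        rcases hsign with h | h <;> rw [h] at ht <;> omega
      have hQ : (1:ℤ) ≤ 2^(m+1) := one_le_pow₀ (by norm_num)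
      have hpow : (2:ℤ)^(m+1+1) = 2 * 2^(m+1) := by ring
      have hs1 : 1 ≤ s := by
        by_contra h
        push_neg at h
        have hs' : s ≤ -1 := by omega
        nlinarith [hj, hjform, htub, hQ, mul_nonneg (sub_nonneg.mpr hQ) (neg_nonneg.mpr (show s + 1 ≤ 0 by omega))]
      -- 2^m < j
      have hmj : (2:ℤ)^m < j := by
        have h2 : (2:ℤ)^(m+1) = 2 * 2^m := by ring
        nlinarith [hjform, htlb, hs1, hP]
      have hmn : 2^m < n := by
        have : ((2^m : ℕ) : ℤ) < (n : ℤ) := by push_cast; rw [hnj]; exact hmj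
        exact_mod_cast this
      have hcl : m < Nat.clog 2 n := (Nat.lt_clog_iff_pow_lt one_lt_two).mpr hmn
      constructor
      · push_cast; omega
      · constructor
        · intro h; exfalso; push_cast at h; omega
        · intro h; exact absurd h hs0
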